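/- Tail bound for a sum of dependent Bernoulli random variables: Let X_1, …, X_T be random variables on a common probability space, each taking values in {0, 1}, with arbitrary dependence, and let q_1, …, q_T be real numbers with q_t ≥ P(X_t = 1) for each t. Define D = Σ_{t=1}^{T} X_t. Then for every d ∈ {1, …, T}, P(D ≥ d) ≤ Σ_{t=d}^{T} q_t. -/
import Mathlib


open Finset MeasureTheory

/-- **Tail bound for a sum of dependent Bernoulli random variables**: if `X 1, …, X T` are
{0,1}-valued random variables (arbitrarily dependent) and `q t ≥ P(X t = 1)` for each
`t ∈ [T]`, then `D = Σ_{t=1}^T X t` satisfies `P(D ≥ d) ≤ Σ_{t=d}^T q t` for every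
`d ∈ {1, …, T}`. -/
theorem dependent_bernoulli_tail_bound
    {Ω : Type*} [MeasurableSpace Ω] (μ : Measure Ω) [IsProbabilityMeasure μ]
    (T : ℕ) (X : ℕ → Ω → ℕ)
    (hX : ∀ t, Measurable (X t))
    (hber : ∀ t ω, X t ω = 0 ∨ X t ω = 1)
    (q : ℕ → ℝ)
    (hq : ∀ t, 1 ≤ t → t ≤ T → (μ {ω | X t ω = 1}).toReal ≤ q t) :
    ∀ d, 1 ≤ d → d ≤ T →
      (μ {ω | d ≤ ∑ t ∈ Finset.Icc 1 T, X t ω}).toReal ≤ ∑ t ∈ Finset.Icc d T, q t := by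
  intro d hd1 hdT
  -- inclusion into union
  have hsub : {ω | d ≤ ∑ t ∈ Finset.Icc 1 T, X t ω} ⊆
      ⋃ t ∈ Finset.Icc d T, {ω | X t ω = 1} := by
    intro ω hω
    simp only [Set.mem_setOf_eq] at hω
    -- the sum equals the card of the set of ones
    have hsum : ∑ t ∈ Finset.Icc 1 T, X t ω
        = ((Finset.Icc 1 T).filter (fun t => X t ω = 1)).card := by
      rw [Finset.card_filter]
      apply Finset.sum_congr rfl
      intro t _
      rcases hber t ω with h | h <;> simp [h]
    have hcard : d ≤ ((Finset.Icc 1 T).filter (fun t => X t ω = 1)).card := by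
      omega
    -- some element of the filter is ≥ d
    by_contra hcon
    simp only [Set.mem_iUnion, Set.mem_setOf_eq, not_exists, Finset.mem_Icc] at hcon
    have hsub2 : (Finset.Icc 1 T).filter (fun t => X t ω = 1) ⊆ Finset.Icc 1 (d - 1) := by
      intro t ht
      simp only [Finset.mem_filter, Finset.mem_Icc] at ht ⊢
      refine ⟨ht.1.1, ?_⟩
      by_contra hlt
      exact hcon t ⟨by omega, ht.1.2⟩ ht.2
    have := Finset.card_le_card hsub2
    rw [Nat.card_Icc] at this
    omega
  have hmeas : ∀ t, MeasurableSet {ω | X t ω = 1} := fun t =>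
    (hX t) (measurableSet_singleton 1)
  have h1 : μ {ω | d ≤ ∑ t ∈ Finset.Icc 1 T, X t ω}
      ≤ ∑ t ∈ Finset.Icc d T, μ {ω | X t ω = 1} :=
    le_trans (measure_mono hsub) (measure_biUnion_finset_le _ _)
  have hfin : ∀ t ∈ Finset.Icc d T, μ {ω | X t ω = 1} ≠ ⊤ :=
    fun t _ => measure_ne_top μ _
  calc (μ {ω | d ≤ ∑ t ∈ Finset.Icc 1 T, X t ω}).toReal
      ≤ (∑ t ∈ Finset.Icc d T, μ {ω | X t ω = 1}).toReal := by
        apply ENNReal.toReal_mono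
        · exact (ENNReal.sum_ne_top).2 hfin
        · exact h1
    _ = ∑ t ∈ Finset.Icc d T, (μ {ω | X t ω = 1}).toReal :=
        ENNReal.toReal_sum hfin
    _ ≤ ∑ t ∈ Finset.Icc d T, q t := by
        apply Finset.sum_le_sum
        intro t ht
        simp only [Finset.mem_Icc] at ht
        exact hq t (le_trans hd1 ht.1) ht.2
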